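/- Let N ≥ 5. Then K(B_1, B_2, B_3) = 0. Moreover, if N ≥ 6 then K(B_1, B_2, B_4) = 0. -/

import Mathlib

noncomputable section

/-- The field `F = ℝ(B_1, …, B_N)` of rational functions in `N` variables
indexed by `ZMod N` (indices read modulo `N`). -/
abbrev RatF (N : ℕ) : Type := FractionRing (MvPolynomial (ZMod N) ℝ)

/-- The generator `B_i` of `ℝ(B_1, …, B_N)`. -/
noncomputable def Bgen (N : ℕ) (i : ZMod N) : RatF N :=
  algebraMap (MvPolynomial (ZMod N) ℝ) (RatF N) (MvPolynomial.X i)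

namespace MixedJacAux

variable {N : ℕ}

theorem Bgen_ne_zero (i : ZMod N) : Bgen N i ≠ 0 := by
  simpa [Bgen, IsFractionRing.to_map_eq_zero_iff] using MvPolynomial.X_ne_zero (R := ℝ) i

theorem zmod_cast_ne_zero {m : ℕ} (h1 : 0 < m) (h2 : m < N) : ((m : ℕ) : ZMod N) ≠ 0 := by
  rw [Ne, ZMod.natCast_eq_zero_iff]
  exact fun h => absurd (Nat.le_of_dvd h1 h) (not_le.mpr h2)

section Der
variable (b : RatF N → RatF N → RatF N)

theorem brk_zero (hadd : ∀ x y z : RatF N, b (x + y) z = b x z + b y z)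
    (z : RatF N) : b 0 z = 0 := by
  have h := hadd 0 0 z
  rw [add_zero] at h
  exact left_eq_add.mp h

theorem brk_neg (hsmul : ∀ (c : ℝ) (x y : RatF N), b (c • x) y = c • b x y)
    (x z : RatF N) : b (-x) z = - b x z := by
  have := hsmul (-1) x z
  simpa [neg_one_smul] using this

theorem brk_sub (hadd : ∀ x y z : RatF N, b (x + y) z = b x z + b y z)
    (hsmul : ∀ (c : ℝ) (x y : RatF N), b (c • x) y = c • b x y)
    (x y z : RatF N) : b (x - y) z = b x z - b y z := by
  rw [sub_eq_add_neg, hadd, brk_neg b hsmul, sub_eq_add_neg]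

theorem brk_one (hleib : ∀ x y z : RatF N, b (x * y) z = x * b y z + y * b x z)
    (z : RatF N) : b 1 z = 0 := by
  have h := hleib 1 1 z
  simp only [mul_one, one_mul] at h
  linear_combination -h

theorem brk_inv (hleib : ∀ x y z : RatF N, b (x * y) z = x * b y z + y * b x z)
    (x z : RatF N) (hx : x ≠ 0) : b x⁻¹ z = -(x⁻¹ * x⁻¹ * b x z) := by
  have h := hleib x x⁻¹ z
  rw [mul_inv_cancel₀ hx, brk_one b hleib] at h
  have hx2 : x * x⁻¹ = 1 := mul_inv_cancel₀ hx
  field_simp at h ⊢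
  linear_combination -h

end Der

end MixedJacAux

set_option maxHeartbeats 2000000 in
open MixedJacAux in
/-- `K(B_1, B_2, B_3) = 0` for `N ≥ 5`; moreover `K(B_1, B_2, B_4) = 0`
for `N ≥ 6`. -/
theorem mixed_jacobiator_vanishes_close_cases (N : ℕ) (hN : 5 ≤ N)
    (bC bS : RatF N → RatF N → RatF N)
    -- `{·,·}_{C2N}` is ℝ-bilinear, antisymmetric, and a derivation in each argument
    (hC_add : ∀ x y z : RatF N, bC (x + y) z = bC x z + bC y z)
    (hC_smul : ∀ (c : ℝ) (x y : RatF N), bC (c • x) y = c • bC x y)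
    (hC_anti : ∀ x y : RatF N, bC x y = - bC y x)
    (hC_leib : ∀ x y z : RatF N, bC (x * y) z = x * bC y z + y * bC x z)
    -- values of `{·,·}_{C2N}` on the generators
    (hC_gen1 : ∀ k : ZMod N,
      bC (Bgen N k) (Bgen N (k + 1)) =
        Bgen N k * Bgen N (k + 1) - Bgen N k - Bgen N (k + 1))
    (hC_gen2 : ∀ k : ZMod N,
      bC (Bgen N k) (Bgen N (k + 2)) =
        - (Bgen N k * Bgen N (k + 2)) / Bgen N (k + 1))
    (hC_gen0 : ∀ i j : ZMod N,
      j - i ≠ 1 → j - i ≠ -1 → j - i ≠ 2 → j - i ≠ -2 → bC (Bgen N i) (Bgen N j) = 0)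
    -- `{·,·}_{S2}` is ℝ-bilinear, antisymmetric, and a derivation in each argument
    (hS_add : ∀ x y z : RatF N, bS (x + y) z = bS x z + bS y z)
    (hS_smul : ∀ (c : ℝ) (x y : RatF N), bS (c • x) y = c • bS x y)
    (hS_anti : ∀ x y : RatF N, bS x y = - bS y x)
    (hS_leib : ∀ x y z : RatF N, bS (x * y) z = x * bS y z + y * bS x z)
    -- values of `{·,·}_{S2}` on the generators
    (hS_gen : ∀ i j : ZMod N,
      bS (Bgen N i) (Bgen N j) =
        ((if i + 1 = j then (1 : ℝ) else 0) - (if i - 1 = j then (1 : ℝ) else 0)) •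
          (Bgen N i * Bgen N j)) :
    (      bS (bC (Bgen N 1) (Bgen N 2)) (Bgen N 3) +
      bS (bC (Bgen N 2) (Bgen N 3)) (Bgen N 1) +
      bS (bC (Bgen N 3) (Bgen N 1)) (Bgen N 2) +
      bC (bS (Bgen N 1) (Bgen N 2)) (Bgen N 3) +
      bC (bS (Bgen N 2) (Bgen N 3)) (Bgen N 1) +
      bC (bS (Bgen N 3) (Bgen N 1)) (Bgen N 2) = 0) ∧
    (6 ≤ N →
    (      bS (bC (Bgen N 1) (Bgen N 2)) (Bgen N 4) +
      bS (bC (Bgen N 2) (Bgen N 4)) (Bgen N 1) +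
      bS (bC (Bgen N 4) (Bgen N 1)) (Bgen N 2) +
      bC (bS (Bgen N 1) (Bgen N 2)) (Bgen N 4) +
      bC (bS (Bgen N 2) (Bgen N 4)) (Bgen N 1) +
      bC (bS (Bgen N 4) (Bgen N 1)) (Bgen N 2) = 0)) := by
  -- notation
  set B1 := Bgen N 1 with hB1def
  set B2 := Bgen N 2 with hB2def
  set B3 := Bgen N 3 with hB3def
  set B4 := Bgen N 4 with hB4def
  -- nonzero numerals in ZMod N
  have h1 : (1 : ZMod N) ≠ 0 := by
    simpa using zmod_cast_ne_zero (N := N) (m := 1) one_pos (by omega)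
  have h2 : (2 : ZMod N) ≠ 0 := by
    simpa using zmod_cast_ne_zero (N := N) (m := 2) (by norm_num) (by omega)
  have h3 : (3 : ZMod N) ≠ 0 := by
    simpa using zmod_cast_ne_zero (N := N) (m := 3) (by norm_num) (by omega)
  have h4 : (4 : ZMod N) ≠ 0 := by
    simpa using zmod_cast_ne_zero (N := N) (m := 4) (by norm_num) (by omega)
  -- nonvanishing of the generators
  have hB2 : B2 ≠ 0 := Bgen_ne_zero 2
  have hB3 : B3 ≠ 0 := Bgen_ne_zero 3
  -- values of the S2 bracket on the relevant generator pairs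
  have hS12 : bS B1 B2 = B1 * B2 := by
    rw [hB1def, hB2def, hS_gen, if_pos (by norm_num),
      if_neg (by intro h; exact h2 (by linear_combination -h))]
    norm_num
  have hS23 : bS B2 B3 = B2 * B3 := by
    rw [hB2def, hB3def, hS_gen, if_pos (by norm_num),
      if_neg (by intro h; exact h2 (by linear_combination -h))]
    norm_num
  have hS13 : bS B1 B3 = 0 := by
    rw [hB1def, hB3def, hS_gen,
      if_neg (by intro h; exact h1 (by linear_combination -h)),
      if_neg (by intro h; exact h3 (by linear_combination -h))]
    norm_num
  have hS21 : bS B2 B1 = -(B1 * B2) := by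
    rw [hB2def, hB1def, hS_gen,
      if_neg (by intro h; exact h2 (by linear_combination h)),
      if_pos (by norm_num)]
    norm_num; ring
  have hS32 : bS B3 B2 = -(B2 * B3) := by
    rw [hB3def, hB2def, hS_gen,
      if_neg (by intro h; exact h2 (by linear_combination h)),
      if_pos (by norm_num)]
    norm_num; ring
  have hS31 : bS B3 B1 = 0 := by
    rw [hB3def, hB1def, hS_gen,
      if_neg (by intro h; exact h3 (by linear_combination h)),
      if_neg (by intro h; exact h1 (by linear_combination h))]
    norm_num
  have hS22 : bS B2 B2 = 0 := by
    rw [hB2def, hS_gen,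
      if_neg (by intro h; exact h1 (by linear_combination h)),
      if_neg (by intro h; exact h1 (by linear_combination -h))]
    norm_num
  -- values of the C2N bracket on the relevant generator pairs
  have e12 : (1 + 1 : ZMod N) = 2 := by norm_num
  have e23 : (2 + 1 : ZMod N) = 3 := by norm_num
  have e13 : (1 + 2 : ZMod N) = 3 := by norm_num
  have hC12 : bC B1 B2 = B1 * B2 - B1 - B2 := by
    have := hC_gen1 1; rw [e12] at this; exact this
  have hC23 : bC B2 B3 = B2 * B3 - B2 - B3 := by
    have := hC_gen1 2; rw [e23] at this; exact this
  have hC13 : bC B1 B3 = -(B1 * B3) / B2 := by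
    have := hC_gen2 1; rw [e13, e12] at this; exact this
  have hC31 : bC B3 B1 = B1 * B3 / B2 := by
    rw [hC_anti, hC13]; field_simp
  -- abbreviations for derivation lemmas
  have hSsub := brk_sub bS hS_add hS_smul
  have hSz := brk_zero bS hS_add
  have hSinv := brk_inv bS hS_leib
  have hCz := brk_zero bC hC_add
  constructor
  · -- K(B1, B2, B3) = 0
    have T1 : bS (bC B1 B2) B3 = B1 * B2 * B3 - B2 * B3 := by
      rw [hC12, hSsub, hSsub, hS_leib, hS13, hS23]; ring
    have T2 : bS (bC B2 B3) B1 = -(B1 * B2 * B3) + B1 * B2 := by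
      rw [hC23, hSsub, hSsub, hS_leib, hS31, hS21]; ring
    have T3 : bS (bC B3 B1) B2 = 0 := by
      rw [hC31, div_eq_mul_inv, hS_leib, hSinv B2 B2 hB2, hS22,
        hS_leib, hS32, hS12]
      ring
    have T4 : bC (bS B1 B2) B3 = B1 * B2 * B3 - B1 * B2 - 2 * (B1 * B3) := by
      rw [hS12, hC_leib, hC23, hC13]
      field_simp
      ring
    have T5 : bC (bS B2 B3) B1 = 2 * (B1 * B3) + B2 * B3 - B1 * B2 * B3 := by
      have hC21 : bC B2 B1 = -(B1 * B2 - B1 - B2) := by rw [hC_anti, hC12]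
      rw [hS23, hC_leib, hC31, hC21]
      field_simp
      ring
    have T6 : bC (bS B3 B1) B2 = 0 := by rw [hS31, hCz]
    rw [T1, T2, T3, T4, T5, T6]; ring
  · -- K(B1, B2, B4) = 0 when N ≥ 6
    intro hN6
    have h5 : (5 : ZMod N) ≠ 0 := by
      simpa using zmod_cast_ne_zero (N := N) (m := 5) (by norm_num) (by omega)
    -- extra S2 values
    have hS14 : bS B1 B4 = 0 := by
      rw [hB1def, hB4def, hS_gen,
        if_neg (by intro h; exact h2 (by linear_combination -h)),
        if_neg (by intro h; exact h4 (by linear_combination -h))]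
      norm_num
    have hS24 : bS B2 B4 = 0 := by
      rw [hB2def, hB4def, hS_gen,
        if_neg (by intro h; exact h1 (by linear_combination -h)),
        if_neg (by intro h; exact h3 (by linear_combination -h))]
      norm_num
    have hS41 : bS B4 B1 = 0 := by
      rw [hB4def, hB1def, hS_gen,
        if_neg (by intro h; exact h4 (by linear_combination h)),
        if_neg (by intro h; exact h2 (by linear_combination h))]
      norm_num
    -- extra C2N values
    have e24 : (2 + 2 : ZMod N) = 4 := by norm_num
    have hC24 : bC B2 B4 = -(B2 * B4) / B3 := by
      have := hC_gen2 2; rw [e24, e23] at this; exact this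
    have hC14 : bC B1 B4 = 0 := by
      rw [hB1def, hB4def]
      apply hC_gen0
      · intro h; exact h2 (by linear_combination h)
      · intro h; exact h4 (by linear_combination h)
      · intro h; exact h1 (by linear_combination h)
      · intro h; exact h5 (by linear_combination h)
    have hC41 : bC B4 B1 = 0 := by rw [hC_anti, hC14, neg_zero]
    have T1 : bS (bC B1 B2) B4 = 0 := by
      rw [hC12, hSsub, hSsub, hS_leib, hS14, hS24]; ring
    have T2 : bS (bC B2 B4) B1 = B1 * B2 * B4 / B3 := by
      rw [hC24, neg_div, div_eq_mul_inv, brk_neg bS hS_smul, hS_leib,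
        hSinv B3 B1 hB3, hS31, hS_leib, hS41, hS21]
      field_simp
      ring
    have T3 : bS (bC B4 B1) B2 = 0 := by rw [hC41, hSz]
    have T4 : bC (bS B1 B2) B4 = -(B1 * B2 * B4 / B3) := by
      rw [hS12, hC_leib, hC24, hC14]
      field_simp
      ring
    have T5 : bC (bS B2 B4) B1 = 0 := by rw [hS24, hCz]
    have T6 : bC (bS B4 B1) B2 = 0 := by rw [hS41, hCz]
    rw [T1, T2, T3, T4, T5, T6]; ring
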